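/- Let X be a real normed space, x₀ ∈ X \ {0}, and let x* be a bounded linear functional with x*(x₀) = ‖x₀‖². If f : [a,b] → X is such that x* ∘ f : [a,b] → ℝ has bounded variation, then there exist functions f₁, f₂ : [a,b] → X, each increasing with respect to the cone C = {x : x*(x) ≥ α‖x‖} (for fixed α ∈ (0,‖x₀‖]), such that x* ∘ f = x* ∘ (f₁ − f₂) on [a,b]; moreover f₁ and f₂ are of weakly bounded variation (y* ∘ fᵢ has bounded variation for every y* ∈ X*). -/

import Mathlib

/-- A real function has bounded variation on `[a,b]`. -/
def BVOn (g : ℝ → ℝ) (a b : ℝ) : Prop :=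
  ∃ M : ℝ, ∀ (n : ℕ) (t : Fin (n + 1) → ℝ), Monotone t →
    (∀ i, t i ∈ Set.Icc a b) →
    ∑ i : Fin n, |g (t i.succ) - g (t i.castSucc)| ≤ M

/-- `g` is increasing on `[a,b]` with respect to the cone `C`. -/
def IncreasingWrt {X : Type*} [NormedAddCommGroup X] (C : Set X)
    (g : ℝ → X) (a b : ℝ) : Prop :=
  ∀ s ∈ Set.Icc a b, ∀ t ∈ Set.Icc a b, s ≤ t → g t - g s ∈ C

/-- `g` is of weakly bounded variation on `[a,b]`. -/
def WBVOn {X : Type*} [NormedAddCommGroup X] [NormedSpace ℝ X]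
    (g : ℝ → X) (a b : ℝ) : Prop :=
  ∀ ys : X →L[ℝ] ℝ, BVOn (fun t => ys (g t)) a b


lemma bvOn_bounded (g : ℝ → ℝ) (a b : ℝ) (h : BVOn g a b) :
    BoundedVariationOn g (Set.Icc a b) := by
  obtain ⟨M, hM⟩ := h
  rw [BoundedVariationOn, eVariationOn, ne_eq, iSup_eq_top]
  push_neg
  refine ⟨ENNReal.ofReal (max M 0), ENNReal.ofReal_lt_top, ?_⟩
  rintro ⟨n, u, hu, hus⟩
  have key := hM n (fun i : Fin (n+1) => u i) (hu.comp (fun i j hij => hij))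
    (fun i => hus i)
  have : ∑ i ∈ Finset.range n, edist (g (u (i + 1))) (g (u i))
      = ENNReal.ofReal (∑ i : Fin n, |g (u (i.castSucc + 1)) - g (u i.castSucc)|) := by
    rw [ENNReal.ofReal_sum_of_nonneg (fun i _ => abs_nonneg _), Finset.sum_range]
    congr 1; ext i
    rw [edist_dist, Real.dist_eq]; rfl
  simp only [this]
  refine le_trans (ENNReal.ofReal_le_ofReal ?_) (ENNReal.ofReal_le_ofReal (le_max_left M 0))
  refine le_trans (le_of_eq ?_) key
  refine Finset.sum_congr rfl fun i _ => ?_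
  congr 2

lemma mono_mul_bv (p : ℝ → ℝ) (c a b : ℝ) (hp : MonotoneOn p (Set.Icc a b)) :
    ∃ M : ℝ, ∀ (n : ℕ) (t : Fin (n + 1) → ℝ), Monotone t →
    (∀ i, t i ∈ Set.Icc a b) →
    ∑ i : Fin n, |p (t i.succ) * c - p (t i.castSucc) * c| ≤ M := by
  rcases le_or_gt a b with hab | hab
  · refine ⟨(p b - p a) * |c|, fun n t ht hts => ?_⟩
    have ha : a ∈ Set.Icc a b := Set.left_mem_Icc.2 hab
    have hb : b ∈ Set.Icc a b := Set.right_mem_Icc.2 hab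
    have step : ∀ i j : Fin (n+1), i ≤ j → p (t i) ≤ p (t j) :=
      fun i j hij => hp (hts i) (hts j) (ht hij)
    set u : ℕ → ℝ := fun i => p (t ⟨min i n, by omega⟩) with hu
    have key : ∑ i : Fin n, |p (t i.succ) * c - p (t i.castSucc) * c|
        = ∑ i ∈ Finset.range n, (u (i+1) - u i) * |c| := by
      rw [Finset.sum_range]
      refine Finset.sum_congr rfl fun i _ => ?_
      have h1 : (⟨min (↑i+1) n, by omega⟩ : Fin (n+1)) = i.succ := by
        ext; simp [Nat.min_eq_left (by omega : (i:ℕ)+1 ≤ n)]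
      have h2 : (⟨min (↑i) n, by omega⟩ : Fin (n+1)) = i.castSucc := by
        ext; simp [Nat.min_eq_left (le_of_lt i.isLt)]
      rw [← sub_mul, abs_mul, hu]
      simp only [h1, h2]
      rw [abs_of_nonneg (sub_nonneg.2 (step _ _ (le_of_lt i.castSucc_lt_succ)))]
    rw [key, ← Finset.sum_mul, Finset.sum_range_sub u n]
    have hun : u n = p (t (Fin.last n)) := by simp [hu, Fin.last]
    have hu0 : u 0 = p (t 0) := by simp [hu, Fin.ext_iff]
    rw [hun, hu0]
    have h3 := hp (hts (Fin.last n)) hb (hts (Fin.last n)).2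
    have h4 := hp ha (hts 0) (hts 0).1
    have : p (t (Fin.last n)) - p (t 0) ≤ p b - p a := by linarith
    exact mul_le_mul_of_nonneg_right this (abs_nonneg c)
  · exact ⟨0, fun n t ht hts => absurd (hts 0)
      (by simp [Set.Icc_eq_empty (not_le.2 hab)])⟩

theorem jordan_decomposition_wbv {X : Type*} [NormedAddCommGroup X]
    [NormedSpace ℝ X] (a b : ℝ) (x₀ : X) (hx₀ : x₀ ≠ 0) (xs : X →L[ℝ] ℝ)
    (hv : xs x₀ = ‖x₀‖ ^ 2) (α : ℝ) (hα : 0 < α) (hα' : α ≤ ‖x₀‖)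
    (f : ℝ → X) (hf : BVOn (fun t => xs (f t)) a b) :
    ∃ f₁ f₂ : ℝ → X,
      IncreasingWrt {x : X | α * ‖x‖ ≤ xs x} f₁ a b ∧
      IncreasingWrt {x : X | α * ‖x‖ ≤ xs x} f₂ a b ∧
      (∀ t ∈ Set.Icc a b, xs (f t) = xs (f₁ t) - xs (f₂ t)) ∧
      WBVOn f₁ a b ∧ WBVOn f₂ a b := by
  have hx0 : (0:ℝ) < ‖x₀‖ := norm_pos_iff.2 hx₀
  have hv2 : (0:ℝ) < ‖x₀‖ ^ 2 := by positivity
  set w : X := (‖x₀‖ ^ 2)⁻¹ • x₀ with hw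
  have hxsw : xs w = 1 := by
    simp [hw, hv, inv_mul_cancel₀ (ne_of_gt hv2)]
  have hnw : ‖w‖ = ‖x₀‖⁻¹ := by
    rw [hw, norm_smul, norm_inv, norm_pow, Real.norm_eq_abs, abs_of_nonneg (norm_nonneg _)]
    field_simp
  have cone : ∀ d : ℝ, 0 ≤ d → d • w ∈ {x : X | α * ‖x‖ ≤ xs x} := by
    intro d hd
    simp only [Set.mem_setOf_eq, map_smul, smul_eq_mul, hxsw, mul_one, norm_smul,
      Real.norm_eq_abs, abs_of_nonneg hd, hnw]
    calc α * (d * ‖x₀‖⁻¹) ≤ ‖x₀‖ * (d * ‖x₀‖⁻¹) := by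
          exact mul_le_mul_of_nonneg_right hα' (by positivity)
      _ = d := by field_simp
  have hbv : BoundedVariationOn (fun t => xs (f t)) (Set.Icc a b) :=
    bvOn_bounded _ a b hf
  have hloc : LocallyBoundedVariationOn (fun t => xs (f t)) (Set.Icc a b) :=
    fun x hx y hy => (eVariationOn.mono _ Set.inter_subset_left).trans_lt
      (lt_top_iff_ne_top.2 hbv) |>.ne
  obtain ⟨p, q, hp, hq, hpq⟩ := hloc.exists_monotoneOn_sub_monotoneOn
  refine ⟨fun t => p t • w, fun t => q t • w, ?_, ?_, ?_, ?_, ?_⟩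
  · intro s hs t ht hst
    rw [← sub_smul]
    exact cone _ (sub_nonneg.2 (hp hs ht hst))
  · intro s hs t ht hst
    rw [← sub_smul]
    exact cone _ (sub_nonneg.2 (hq hs ht hst))
  · intro t _
    have : xs (f t) = p t - q t := by
      have := congrFun hpq t
      simpa using this
    simp [this, hxsw]
  · intro ys
    have : ∀ t, ys (p t • w) = p t * ys w := by
      intro t; simp
    simpa only [BVOn, this] using mono_mul_bv p (ys w) a b hp
  · intro ys
    have : ∀ t, ys (q t • w) = q t * ys w := by
      intro t; simp
    simpa only [BVOn, this] using mono_mul_bv q (ys w) a b hq
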